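/- Let G be a finite simple graph with n vertices whose degree sequence listed in nondecreasing order is d_1 ≤ d_2 ≤ ... ≤ d_n. Let λ ≥ 0 be the largest integer (with 0 ≤ λ ≤ n) such that ∑_{i=1}^{λ} (⌈d_i/2⌉ + 1) ≤ ∑_{i=λ+1}^{n} ⌊d_i/2⌋ (where the empty sum is 0). Then the signed domination number of G satisfies γ_s(G) ≥ n − 2λ. -/

import Mathlib

/-- `f : V → ℤ` is a signed domination function of `G`: it takes values in `{-1, +1}`
and sums to at least `1` over every closed neighbourhood. -/
def SimpleGraph.IsSignedDominationFunction {V : Type*} [Fintype V] [DecidableEq V]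
    (G : SimpleGraph V) [DecidableRel G.Adj] (f : V → ℤ) : Prop :=
  (∀ v, f v = 1 ∨ f v = -1) ∧
  ∀ v : V, 1 ≤ ∑ u ∈ insert v (G.neighborFinset v), f u

/-- The signed domination number `γ_s(G)`. -/
noncomputable def SimpleGraph.signedDominationNumber {V : Type*} [Fintype V] [DecidableEq V]
    (G : SimpleGraph V) [DecidableRel G.Adj] : ℤ :=
  sInf {s : ℤ | ∃ f : V → ℤ, G.IsSignedDominationFunction f ∧ s = ∑ v, f v}

private lemma fin_strictMono_le {k n : ℕ} {e : Fin k → Fin n} (he : StrictMono e)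
    (i : Fin k) : (i : ℕ) ≤ e i := by
  suffices h : ∀ m, ∀ hm : m < k, m ≤ (e ⟨m, hm⟩ : ℕ) by exact h i.1 i.2
  intro m
  induction m with
  | zero => intro _; exact Nat.zero_le _
  | succ j ih =>
    intro hm
    have hj : j < k := by omega
    have h1 := ih hj
    have h2 : (e ⟨j, hj⟩ : ℕ) < (e ⟨j + 1, hm⟩ : ℕ) := he (by simp [Fin.lt_def])
    omega

private lemma fin_strictMono_ge {k n : ℕ} {e : Fin k → Fin n} (he : StrictMono e)
    (i : Fin k) : (e i : ℕ) ≤ n - k + i := by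
  have hrev : StrictMono (fun j : Fin k => (e j.rev).rev) := by
    intro a b hab
    exact Fin.rev_lt_rev.mpr (he (Fin.rev_lt_rev.mpr hab))
  have h := fin_strictMono_le hrev i.rev
  simp only [Fin.rev_rev] at h
  rw [Fin.val_rev, Fin.val_rev] at h
  have hi := i.2
  have hei := (e i).2
  omega

private lemma sum_prefix_le {n k : ℕ} (g : Fin n → ℕ) (hg : Monotone g)
    (S : Finset (Fin n)) (hS : S.card = k) :
    ∑ i ∈ Finset.univ.filter (fun i : Fin n => (i : ℕ) < k), g i ≤ ∑ i ∈ S, g i := by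
  have hk : k ≤ n := by
    have := Finset.card_le_univ S
    simpa [hS] using this
  set e := S.orderEmbOfFin hS with he
  have himg : Finset.image (fun j => e j) Finset.univ = S := by
    apply Finset.eq_of_subset_of_card_le
    · intro x hx
      simp only [Finset.mem_image, Finset.mem_univ, true_and] at hx
      obtain ⟨j, rfl⟩ := hx
      exact S.orderEmbOfFin_mem hS j
    · rw [hS, Finset.card_image_of_injective _ e.injective, Finset.card_univ, Fintype.card_fin]
  have himg2 : Finset.image (fun j : Fin k => (⟨j, lt_of_lt_of_le j.2 hk⟩ : Fin n)) Finset.univ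
      = Finset.univ.filter (fun i : Fin n => (i : ℕ) < k) := by
    ext x
    simp only [Finset.mem_image, Finset.mem_univ, true_and, Finset.mem_filter]
    constructor
    · rintro ⟨j, rfl⟩; exact j.2
    · intro hx; exact ⟨⟨x, hx⟩, rfl⟩
  have hs1 : ∑ i ∈ Finset.image (fun j : Fin k => (⟨j, lt_of_lt_of_le j.2 hk⟩ : Fin n))
      Finset.univ, g i = ∑ j : Fin k, g ⟨j, lt_of_lt_of_le j.2 hk⟩ :=
    Finset.sum_image (fun a _ b _ h => by
      rw [Fin.ext_iff] at h ⊢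
      simpa using h)
  have hs2 : ∑ i ∈ Finset.image (fun j : Fin k => e j) Finset.univ, g i
      = ∑ j : Fin k, g (e j) :=
    Finset.sum_image (fun a _ b _ h => e.injective h)
  rw [← himg, ← himg2, hs1, hs2]
  apply Finset.sum_le_sum
  intro j _
  apply hg
  rw [Fin.le_def]
  exact fin_strictMono_le e.strictMono j

private lemma sum_le_suffix {n k : ℕ} (g : Fin n → ℕ) (hg : Monotone g)
    (S : Finset (Fin n)) (hS : S.card = k) :
    ∑ i ∈ S, g i ≤ ∑ i ∈ Finset.univ.filter (fun i : Fin n => n - k ≤ (i : ℕ)), g i := by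
  have hk : k ≤ n := by
    have := Finset.card_le_univ S
    simpa [hS] using this
  set e := S.orderEmbOfFin hS with he
  have himg : Finset.image (fun j => e j) Finset.univ = S := by
    apply Finset.eq_of_subset_of_card_le
    · intro x hx
      simp only [Finset.mem_image, Finset.mem_univ, true_and] at hx
      obtain ⟨j, rfl⟩ := hx
      exact S.orderEmbOfFin_mem hS j
    · rw [hS, Finset.card_image_of_injective _ e.injective, Finset.card_univ, Fintype.card_fin]
  have himg2 : Finset.image (fun j : Fin k => (⟨n - k + j, by omega⟩ : Fin n)) Finset.univ
      = Finset.univ.filter (fun i : Fin n => n - k ≤ (i : ℕ)) := by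
    ext x
    simp only [Finset.mem_image, Finset.mem_univ, true_and, Finset.mem_filter]
    constructor
    · rintro ⟨j, rfl⟩; simp
    · intro hx
      have hx2 := x.2
      refine ⟨⟨(x : ℕ) - (n - k), by omega⟩, ?_⟩
      apply Fin.ext
      simp only []
      omega
  have hs1 : ∑ i ∈ Finset.image (fun j : Fin k => (⟨n - k + j, by omega⟩ : Fin n))
      Finset.univ, g i = ∑ j : Fin k, g ⟨n - k + j, by omega⟩ :=
    Finset.sum_image (fun a _ b _ h => by
      have := congrArg Fin.val h
      simp only [] at this
      exact Fin.ext (by omega))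
  have hs2 : ∑ i ∈ Finset.image (fun j : Fin k => e j) Finset.univ, g i
      = ∑ j : Fin k, g (e j) :=
    Finset.sum_image (fun a _ b _ h => e.injective h)
  rw [← himg, ← himg2, hs2, hs1]
  apply Finset.sum_le_sum
  intro j _
  apply hg
  rw [Fin.le_def]
  exact fin_strictMono_ge e.strictMono j

open Finset in
theorem signed_domination_lower_bound_lambda
    {V : Type*} [Fintype V] [DecidableEq V] (G : SimpleGraph V) [DecidableRel G.Adj]
    (n : ℕ) (hn : n = Fintype.card V)
    (σ : V ≃ Fin n) (d : Fin n → ℕ) (hmono : Monotone d)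
    (hdeg : ∀ v : V, d (σ v) = G.degree v)
    (lam : ℕ) (hlam : lam ≤ n)
    (hsum : ∑ i ∈ univ.filter (fun i : Fin n => (i : ℕ) < lam), ((d i + 1) / 2 + 1) ≤
            ∑ i ∈ univ.filter (fun i : Fin n => lam ≤ (i : ℕ)), d i / 2)
    (hlargest : ∀ μ : ℕ, μ ≤ n →
      (∑ i ∈ univ.filter (fun i : Fin n => (i : ℕ) < μ), ((d i + 1) / 2 + 1) ≤
        ∑ i ∈ univ.filter (fun i : Fin n => μ ≤ (i : ℕ)), d i / 2) → μ ≤ lam) :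
    (n : ℤ) - 2 * (lam : ℤ) ≤ G.signedDominationNumber := by
  unfold SimpleGraph.signedDominationNumber
  have hne : {s : ℤ | ∃ f : V → ℤ, G.IsSignedDominationFunction f ∧ s = ∑ v, f v}.Nonempty := by
    refine ⟨∑ v : V, (1 : ℤ), fun _ => 1, ⟨fun v => Or.inl rfl, fun v => ?_⟩, rfl⟩
    rw [Finset.sum_const, nsmul_eq_mul, mul_one]
    exact_mod_cast Finset.card_pos.mpr (Finset.insert_nonempty _ _)
  apply le_csInf hne
  rintro s ⟨f, ⟨hf1, hf2⟩, rfl⟩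
  set P : Finset V := univ.filter (fun v => f v = 1) with hP
  set M : Finset V := univ.filter (fun v => f v = -1) with hM
  have hMP : univ.filter (fun v => ¬ f v = 1) = M := by
    apply Finset.filter_congr
    intro v _
    rcases hf1 v with h | h <;> simp [h]
  have hPM : P.card + M.card = n := by
    rw [hn, ← Finset.card_univ,
      ← Finset.card_filter_add_card_filter_not (s := univ) (p := fun v => f v = 1)]
    rw [hMP]
  have hsumf : ∑ v, f v = (P.card : ℤ) - M.card := by
    rw [← Finset.sum_filter_add_sum_filter_not Finset.univ (fun v => f v = 1) f, hMP]
    have h1 : ∑ v ∈ P, f v = (P.card : ℤ) := by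
      rw [Finset.sum_congr rfl (fun v hv => (Finset.mem_filter.mp hv).2)]
      simp; rfl
    have h2 : ∑ v ∈ M, f v = -(M.card : ℤ) := by
      rw [Finset.sum_congr rfl (fun v hv => (Finset.mem_filter.mp hv).2)]
      simp; rfl
    rw [h1, h2]
    ring
  -- per-vertex analysis
  have hnbhd : ∀ v : V,
      ∑ u ∈ insert v (G.neighborFinset v), f u
        = f v + (((G.neighborFinset v).filter (fun u => f u = 1)).card : ℤ)
            - ((G.neighborFinset v).filter (fun u => f u = -1)).card := by
    intro v
    rw [Finset.sum_insert (G.notMem_neighborFinset_self v),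
      ← Finset.sum_filter_add_sum_filter_not (G.neighborFinset v) (fun u => f u = 1) f]
    have hMP' : (G.neighborFinset v).filter (fun u => ¬ f u = 1)
        = (G.neighborFinset v).filter (fun u => f u = -1) := by
      apply Finset.filter_congr
      intro u _
      rcases hf1 u with h | h <;> simp [h]
    rw [hMP']
    have h1 : ∑ u ∈ (G.neighborFinset v).filter (fun u => f u = 1), f u
        = (((G.neighborFinset v).filter (fun u => f u = 1)).card : ℤ) := by
      rw [Finset.sum_congr rfl (fun u hu => (Finset.mem_filter.mp hu).2)]
      simp
    have h2 : ∑ u ∈ (G.neighborFinset v).filter (fun u => f u = -1), f u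
        = -(((G.neighborFinset v).filter (fun u => f u = -1)).card : ℤ) := by
      rw [Finset.sum_congr rfl (fun u hu => (Finset.mem_filter.mp hu).2)]
      simp
    rw [h1, h2]
    ring
  have hABcard : ∀ v : V,
      ((G.neighborFinset v).filter (fun u => f u = 1)).card
        + ((G.neighborFinset v).filter (fun u => f u = -1)).card = G.degree v := by
    intro v
    rw [SimpleGraph.degree]
    rw [← Finset.card_filter_add_card_filter_not (s := G.neighborFinset v)
      (p := fun u => f u = 1)]
    congr 2
    apply Finset.filter_congr
    intro u _
    rcases hf1 u with h | h <;> simp [h]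
  have hAeq : ∀ v : V, (G.neighborFinset v).filter (fun u => f u = 1)
      = P.filter (fun u => G.Adj v u) := by
    intro v
    ext u
    simp only [Finset.mem_filter, SimpleGraph.mem_neighborFinset, hP, Finset.mem_univ, true_and]
    tauto
  have hBeq : ∀ v : V, (G.neighborFinset v).filter (fun u => f u = -1)
      = M.filter (fun u => G.Adj v u) := by
    intro v
    ext u
    simp only [Finset.mem_filter, SimpleGraph.mem_neighborFinset, hM, Finset.mem_univ, true_and]
    tauto
  have hMvert : ∀ v ∈ M, (G.degree v + 1) / 2 + 1 ≤ (P.filter (fun u => G.Adj v u)).card := by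
    intro v hv
    have hfv : f v = -1 := (Finset.mem_filter.mp hv).2
    have h1 := hf2 v
    rw [hnbhd v, hfv, hAeq v, hBeq v] at h1
    have h2 := hABcard v
    rw [hAeq v, hBeq v] at h2
    omega
  have hPvert : ∀ v ∈ P, (M.filter (fun u => G.Adj v u)).card ≤ G.degree v / 2 := by
    intro v hv
    have hfv : f v = 1 := (Finset.mem_filter.mp hv).2
    have h1 := hf2 v
    rw [hnbhd v, hfv, hAeq v, hBeq v] at h1
    have h2 := hABcard v
    rw [hAeq v, hBeq v] at h2
    omega
  -- double counting
  have hcount : ∑ v ∈ M, (P.filter (fun u => G.Adj v u)).card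
      = ∑ u ∈ P, (M.filter (fun w => G.Adj u w)).card := by
    simp only [Finset.card_filter]
    rw [Finset.sum_comm]
    apply Finset.sum_congr rfl
    intro u _
    apply Finset.sum_congr rfl
    intro v _
    simp [G.adj_comm]
  have hmain : ∑ v ∈ M, ((G.degree v + 1) / 2 + 1) ≤ ∑ u ∈ P, G.degree u / 2 :=
    le_trans (Finset.sum_le_sum hMvert) (hcount ▸ Finset.sum_le_sum hPvert)
  -- transport to Fin n
  have hg1 : Monotone (fun i : Fin n => (d i + 1) / 2 + 1) := by
    intro a b hab
    have := hmono hab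
    simp only []
    omega
  have hg2 : Monotone (fun i : Fin n => d i / 2) := by
    intro a b hab
    have := hmono hab
    simp only []
    omega
  have hMIcard : (M.image σ).card = M.card :=
    Finset.card_image_of_injective _ σ.injective
  have hPIcard : (P.image σ).card = P.card :=
    Finset.card_image_of_injective _ σ.injective
  have hMI : ∑ i ∈ M.image σ, ((d i + 1) / 2 + 1) = ∑ v ∈ M, ((G.degree v + 1) / 2 + 1) := by
    rw [Finset.sum_image (fun a _ b _ h => σ.injective h)]
    exact Finset.sum_congr rfl (fun v _ => by rw [hdeg v])
  have hPI : ∑ i ∈ P.image σ, (d i / 2) = ∑ v ∈ P, G.degree v / 2 := by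
    rw [Finset.sum_image (fun a _ b _ h => σ.injective h)]
    exact Finset.sum_congr rfl (fun v _ => by rw [hdeg v])
  have hA := sum_prefix_le (fun i => (d i + 1) / 2 + 1) hg1 (M.image σ) hMIcard
  have hB := sum_le_suffix (fun i => d i / 2) hg2 (P.image σ) hPIcard
  have hnP : n - P.card = M.card := by omega
  rw [hnP] at hB
  rw [hMI] at hA
  rw [hPI] at hB
  have hchain : ∑ i ∈ univ.filter (fun i : Fin n => (i : ℕ) < M.card), ((d i + 1) / 2 + 1) ≤
      ∑ i ∈ univ.filter (fun i : Fin n => M.card ≤ (i : ℕ)), d i / 2 :=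
    le_trans hA (le_trans hmain hB)
  have hmlam : M.card ≤ lam := hlargest M.card (by omega) hchain
  rw [hsumf]
  have : (P.card : ℤ) + M.card = n := by exact_mod_cast hPM
  omega
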